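/- The discrete Ricci curvatures of the Hasse diagrams of the strong Bruhat order of the exceptional Coxeter groups F_4, E_6 and H_3 satisfy Ric(H(F_4)) ≥ −28, Ric(H(E_6)) ≥ −46, and Ric(H(H_3)) ≥ −14. -/

import Mathlib

set_option maxRecDepth 1000000
set_option maxHeartbeats 4000000


/-- Graph Laplacian: `Δ(f)(x) = Σ_{v ∈ B(1,x)} (f(v) − f(x))`. -/
noncomputable def graphLap {V : Type*} (G : SimpleGraph V) (f : V → ℝ) (x : V) : ℝ :=
  ∑ᶠ v ∈ G.neighborSet x, (f v - f x)

/-- `Γ(f,g)(x) = (1/2) Σ_{v ∈ B(1,x)} (f(x) − f(v))(g(x) − g(v))`. -/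
noncomputable def graphGamma {V : Type*} (G : SimpleGraph V) (f g : V → ℝ) (x : V) : ℝ :=
  (1 / 2) * ∑ᶠ v ∈ G.neighborSet x, (f x - f v) * (g x - g v)

/-- `Γ₂(f)(x) = (1/2) Δ(Γ(f,f))(x) − Γ(f, Δ(f))(x)`. -/
noncomputable def graphGamma2 {V : Type*} (G : SimpleGraph V) (f : V → ℝ) (x : V) : ℝ :=
  (1 / 2) * graphLap G (fun y => graphGamma G f f y) x - graphGamma G f (graphLap G f) x

/-- The discrete Ricci curvature of a graph: the largest `K ∈ ℝ ∪ {−∞}` such that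
`Γ₂(f)(x) ≥ K·Γ(f)(x)` for all `f` and all vertices `x`. -/
noncomputable def graphRic {V : Type*} (G : SimpleGraph V) : EReal :=
  sSup (Real.toEReal '' {K : ℝ | ∀ (f : V → ℝ) (x : V),
    K * graphGamma G f f x ≤ graphGamma2 G f x})

/-- The local discrete Ricci curvature of a graph at a vertex `x`. -/
noncomputable def graphRicAt {V : Type*} (G : SimpleGraph V) (x : V) : EReal :=
  sSup (Real.toEReal '' {K : ℝ | ∀ f : V → ℝ,
    K * graphGamma G f f x ≤ graphGamma2 G f x})

/-- The Bruhat order on a Coxeter group: `u ≤ v` iff there is a chain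
`u = w_0 → w_1 → ⋯ → w_k = v` where each step multiplies on the left by a
reflection and strictly increases the length. -/
def CoxeterSystem.bruhatLE {B : Type*} {W : Type*} [Group W] {M : CoxeterMatrix B}
    (cs : CoxeterSystem M W) : W → W → Prop :=
  Relation.ReflTransGen (fun u v =>
    (∃ t, cs.IsReflection t ∧ v = t * u) ∧ cs.length u < cs.length v)

/-- The strict Bruhat order. -/
def CoxeterSystem.bruhatLT {B : Type*} {W : Type*} [Group W] {M : CoxeterMatrix B}
    (cs : CoxeterSystem M W) (u v : W) : Prop :=
  cs.bruhatLE u v ∧ u ≠ v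

/-- `v` covers `u` in the Bruhat order. -/
def CoxeterSystem.bruhatCovBy {B : Type*} {W : Type*} [Group W] {M : CoxeterMatrix B}
    (cs : CoxeterSystem M W) (u v : W) : Prop :=
  cs.bruhatLT u v ∧ ¬∃ θ, cs.bruhatLT u θ ∧ cs.bruhatLT θ v

/-- The Hasse diagram of the (strong) Bruhat order of a Coxeter group, as a simple
graph: `u` and `v` are adjacent iff one covers the other. -/
def CoxeterSystem.bruhatHasse {B : Type*} {W : Type*} [Group W] {M : CoxeterMatrix B}
    (cs : CoxeterSystem M W) : SimpleGraph W :=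
  SimpleGraph.fromRel cs.bruhatCovBy



open Finset in
theorem gamma2_bound {V : Type*} (G : SimpleGraph V)
    (hfin : ∀ v : V, (G.neighborSet v).Finite) (D : ℕ)
    (hD : ∀ v : V, (hfin v).toFinset.card ≤ D) (f : V → ℝ) (x : V) :
    ((2 : ℝ) - D) * graphGamma G f f x ≤ graphGamma2 G f x := by
  classical
  set F : V → Finset V := fun v => (hfin v).toFinset with hF
  have hmem : ∀ v w : V, w ∈ F v ↔ G.Adj v w := by
    intro v w; simp [hF, Set.Finite.mem_toFinset, SimpleGraph.mem_neighborSet]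
  have hLap : ∀ (g : V → ℝ) (v : V), graphLap G g v = ∑ w ∈ F v, (g w - g v) := by
    intro g v; exact finsum_mem_eq_finite_toFinset_sum _ (hfin v)
  have hGam : ∀ (g h : V → ℝ) (v : V),
      graphGamma G g h v = (1/2) * ∑ w ∈ F v, (g v - g w) * (h v - h w) := by
    intro g h v; unfold graphGamma
    rw [finsum_mem_eq_finite_toFinset_sum _ (hfin v)]
  -- key per-neighbor bound
  have key : ∀ v ∈ F x, (1 - (D:ℝ)/4) * (f x - f v)^2
      ≤ (1/2) * graphGamma G f f v + (1/2) * (f x - f v) * graphLap G f v := by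
    intro v hv
    have hxv : x ∈ F v := by
      rw [hmem]; exact ((hmem x v).1 hv).symm
    have e1 : (1/2) * graphGamma G f f v + (1/2) * (f x - f v) * graphLap G f v
        = (∑ w ∈ F v, ((1:ℝ)/4) * (f w - 2 * f v + f x)^2)
          - ((F v).card : ℝ) * ((1/4) * (f x - f v)^2) := by
      have hc : ((F v).card : ℝ) * ((1/4) * (f x - f v)^2)
          = ∑ _w ∈ F v, (1/4) * (f x - f v)^2 := by
        rw [Finset.sum_const, nsmul_eq_mul]
      rw [hGam, hLap, Finset.mul_sum, Finset.mul_sum, Finset.mul_sum,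
        ← Finset.sum_add_distrib, hc, ← Finset.sum_sub_distrib]
      exact Finset.sum_congr rfl (fun w _ => by ring)
    have e2 : ((1:ℝ)/4) * (f x - 2 * f v + f x)^2
        ≤ ∑ w ∈ F v, ((1:ℝ)/4) * (f w - 2 * f v + f x)^2 :=
      Finset.single_le_sum (f := fun w => ((1:ℝ)/4) * (f w - 2 * f v + f x)^2)
        (fun w _ => by positivity) hxv
    have e3 : ((F v).card : ℝ) * ((1/4) * (f x - f v)^2)
        ≤ (D : ℝ) * ((1/4) * (f x - f v)^2) := by
      apply mul_le_mul_of_nonneg_right _ (by positivity)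
      exact_mod_cast hD v
    rw [e1]
    nlinarith [e2, e3, sq_nonneg (f x - f v)]
  -- assemble
  have hcard : ((F x).card : ℝ) ≤ D := by exact_mod_cast hD x
  have hΓ : graphGamma G f f x = (1/2) * ∑ v ∈ F x, (f x - f v)^2 := by
    rw [hGam]; congr 1; exact Finset.sum_congr rfl (fun w _ => by ring)
  have hΓnonneg : 0 ≤ graphGamma G f f x := by
    rw [hΓ]; positivity
  have hsum : ∑ v ∈ F x, (f x - f v)^2 = 2 * graphGamma G f f x := by
    rw [hΓ]; ring
  have decomp : graphGamma2 G f x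
      = (∑ v ∈ F x, ((1/2) * graphGamma G f f v + (1/2) * (f x - f v) * graphLap G f v))
        - ((F x).card : ℝ) / 2 * graphGamma G f f x
        + (1/2) * (graphLap G f x)^2 := by
    have hsx : ∑ v ∈ F x, (f x - f v) = - graphLap G f x := by
      rw [hLap f x, ← Finset.sum_neg_distrib]
      exact Finset.sum_congr rfl (fun w _ => by ring)
    have h1 : graphLap G (fun y => graphGamma G f f y) x
        = (∑ v ∈ F x, graphGamma G f f v) - ((F x).card : ℝ) * graphGamma G f f x := by
      rw [hLap, Finset.sum_sub_distrib, Finset.sum_const, nsmul_eq_mul]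
    have h2 : graphGamma G f (graphLap G f) x
        = (1/2) * ((- graphLap G f x) * graphLap G f x
            - ∑ v ∈ F x, (f x - f v) * graphLap G f v) := by
      rw [hGam]
      congr 1
      have : ∑ v ∈ F x, (f x - f v) * (graphLap G f x - graphLap G f v)
          = (∑ v ∈ F x, (f x - f v)) * graphLap G f x
            - ∑ v ∈ F x, (f x - f v) * graphLap G f v := by
        rw [Finset.sum_mul, ← Finset.sum_sub_distrib]
        exact Finset.sum_congr rfl (fun w _ => by ring)
      rw [this, hsx]
    have h3 : ∑ v ∈ F x, ((1/2) * graphGamma G f f v + (1/2) * (f x - f v) * graphLap G f v)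
        = (1/2) * (∑ v ∈ F x, graphGamma G f f v)
          + (1/2) * ∑ v ∈ F x, (f x - f v) * graphLap G f v := by
      rw [Finset.sum_add_distrib, Finset.mul_sum, Finset.mul_sum]
      congr 1
      exact Finset.sum_congr rfl (fun w _ => by ring)
    unfold graphGamma2
    rw [h1, h2, h3]
    ring
  have hsumkey : ∑ v ∈ F x, (1 - (D:ℝ)/4) * (f x - f v)^2
      ≤ ∑ v ∈ F x, ((1/2) * graphGamma G f f v + (1/2) * (f x - f v) * graphLap G f v) :=
    Finset.sum_le_sum key
  have hlhs : ∑ v ∈ F x, (1 - (D:ℝ)/4) * (f x - f v)^2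
      = (1 - (D:ℝ)/4) * (2 * graphGamma G f f x) := by
    rw [← Finset.mul_sum, hsum]
  rw [decomp]
  have hcard2 : ((F x).card : ℝ) / 2 * graphGamma G f f x ≤ (D:ℝ)/2 * graphGamma G f f x := by
    apply mul_le_mul_of_nonneg_right _ hΓnonneg
    linarith
  nlinarith [hsumkey, hlhs, sq_nonneg (graphLap G f x)]

section Bruhat

variable {B : Type*} {W : Type*} [Group W] {M : CoxeterMatrix B} (cs : CoxeterSystem M W)

theorem covBy_step {u v : W} (h : cs.bruhatCovBy u v) :
    ∃ t, cs.IsReflection t ∧ v = t * u := by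
  obtain ⟨⟨hle, hne⟩, hnot⟩ := h
  rcases hle.cases_tail with heq | ⟨θ, hθ, hstep⟩
  · exact absurd heq.symm hne
  · by_cases hθu : θ = u
    · subst hθu
      exact hstep.1
    · exfalso
      apply hnot
      refine ⟨θ, ⟨hθ, fun h => hθu h.symm⟩, Relation.ReflTransGen.single hstep, ?_⟩
      intro h
      subst h
      exact lt_irrefl _ hstep.2

theorem adj_reflection {x v : W} (h : (cs.bruhatHasse).Adj x v) :
    ∃ t, cs.IsReflection t ∧ v = t * x := by
  rw [CoxeterSystem.bruhatHasse, SimpleGraph.fromRel_adj] at h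
  obtain ⟨hne, hcov | hcov⟩ := h
  · exact covBy_step cs hcov
  · obtain ⟨t, ht, hx⟩ := covBy_step cs hcov
    exact ⟨t, ht, by rw [hx, ← mul_assoc, ht.mul_self, one_mul]⟩

theorem neighbor_finite (T : List (List B))
    (hrefl : ∀ t, cs.IsReflection t → ∃ w ∈ T, cs.wordProd w = t) (x : W) :
    ((cs.bruhatHasse).neighborSet x).Finite := by
  apply Set.Finite.subset ((T.finite_toSet).image (fun w => cs.wordProd w * x))
  intro v hv
  obtain ⟨t, ht, rfl⟩ := adj_reflection cs hv
  obtain ⟨w, hw, rfl⟩ := hrefl t ht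
  exact ⟨w, hw, rfl⟩

theorem neighbor_card_le (T : List (List B))
    (hrefl : ∀ t, cs.IsReflection t → ∃ w ∈ T, cs.wordProd w = t) (x : W)
    (hfin : ((cs.bruhatHasse).neighborSet x).Finite) :
    hfin.toFinset.card ≤ T.length := by
  classical
  set S : Finset W := (T.map (fun w => cs.wordProd w * x)).toFinset with hS
  have hsub : hfin.toFinset ⊆ S := by
    intro v hv
    rw [Set.Finite.mem_toFinset] at hv
    obtain ⟨t, ht, rfl⟩ := adj_reflection cs hv
    obtain ⟨w, hw, rfl⟩ := hrefl t ht
    rw [hS, List.mem_toFinset, List.mem_map]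
    exact ⟨w, hw, rfl⟩
  calc hfin.toFinset.card ≤ S.card := Finset.card_le_card hsub
    _ ≤ (T.map (fun w => cs.wordProd w * x)).length := List.toFinset_card_le _
    _ = T.length := List.length_map _

theorem gamma_nonneg {V : Type*} (G : SimpleGraph V) (x : V)
    (hfin : ((G.neighborSet x)).Finite) (f : V → ℝ) :
    0 ≤ graphGamma G f f x := by
  unfold graphGamma
  rw [finsum_mem_eq_finite_toFinset_sum _ hfin]
  have : 0 ≤ ∑ v ∈ hfin.toFinset, (f x - f v) * (f x - f v) :=
    Finset.sum_nonneg (fun v _ => mul_self_nonneg _)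
  linarith

end Bruhat


namespace CoxRW

variable {B : Type*} [DecidableEq B] {W : Type*} [Group W] {M : CoxeterMatrix B}

abbrev Rule (B : Type*) := List B × List B

def applyRuleAt (r : Rule B) (p : ℕ) (w : List B) : List B :=
  if (w.drop p).take r.1.length = r.1 then
    w.take p ++ r.2 ++ (w.drop p).drop r.1.length
  else w

theorem wordProd_applyRuleAt (cs : CoxeterSystem M W) (r : Rule B)
    (h : cs.wordProd r.1 = cs.wordProd r.2) (p : ℕ) (w : List B) :
    cs.wordProd (applyRuleAt r p w) = cs.wordProd w := by
  unfold applyRuleAt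
  split
  case isTrue hh =>
    have h2 : w.drop p = r.1 ++ (w.drop p).drop r.1.length := by
      conv_lhs => rw [← List.take_append_drop r.1.length (w.drop p)]
      rw [hh]
    conv_rhs => rw [← List.take_append_drop p w, h2]
    simp only [cs.wordProd_append, h, mul_assoc]
  case isFalse => rfl

def applySteps (rules : List (Rule B)) : List (ℕ × ℕ) → List B → List B
  | [], w => w
  | (k, p) :: st, w => applySteps rules st (applyRuleAt (rules.getD k ([], [])) p w)

def Good (cs : CoxeterSystem M W) (rules : List (Rule B)) : Prop :=
  ∀ r ∈ rules, cs.wordProd r.1 = cs.wordProd r.2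

theorem good_getD {cs : CoxeterSystem M W} {rules : List (Rule B)} (h : Good cs rules) (k : ℕ) :
    cs.wordProd (rules.getD k ([], [])).1 = cs.wordProd (rules.getD k ([], [])).2 := by
  by_cases hk : k < rules.length
  · rw [List.getD_eq_getElem rules _ hk]
    exact h _ (List.getElem_mem hk)
  · rw [List.getD_eq_default rules _ (le_of_not_gt hk)]

theorem wordProd_applySteps (cs : CoxeterSystem M W) {rules : List (Rule B)}
    (h : Good cs rules) (st : List (ℕ × ℕ)) (w : List B) :
    cs.wordProd (applySteps rules st w) = cs.wordProd w := by
  induction st generalizing w with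
  | nil => rfl
  | cons s st ih =>
    obtain ⟨k, p⟩ := s
    rw [applySteps, ih, wordProd_applyRuleAt cs _ (good_getD h k)]

/-- Trace item: (new rule, witness word, steps to lhs, steps to rhs). -/
abbrev TraceItem (B : Type*) := Rule B × List B × List (ℕ × ℕ) × List (ℕ × ℕ)

def checkTrace (acc : List (Rule B)) : List (TraceItem B) → Bool
  | [] => true
  | (r, w, st1, st2) :: rest =>
    (applySteps acc st1 w == r.1) && (applySteps acc st2 w == r.2)
      && checkTrace (r :: acc) rest

theorem good_cons {cs : CoxeterSystem M W} {rules : List (Rule B)} {r : Rule B}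
    (hr : cs.wordProd r.1 = cs.wordProd r.2) (h : Good cs rules) : Good cs (r :: rules) := by
  intro q hq
  rcases List.mem_cons.1 hq with rfl | hq
  · exact hr
  · exact h q hq

theorem checkTrace_good (cs : CoxeterSystem M W) {acc : List (Rule B)} {tr : List (TraceItem B)}
    (hacc : Good cs acc) (hchk : checkTrace acc tr = true) :
    Good cs (tr.map (fun q => q.1) ++ acc) := by
  induction tr generalizing acc with
  | nil => simpa using hacc
  | cons q rest ih =>
    obtain ⟨r, w, st1, st2⟩ := q
    rw [checkTrace, Bool.and_eq_true, Bool.and_eq_true] at hchk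
    obtain ⟨⟨e1, e2⟩, echk⟩ := hchk
    have hr : cs.wordProd r.1 = cs.wordProd r.2 := by
      rw [← eq_of_beq e1, ← eq_of_beq e2,
        wordProd_applySteps cs hacc, wordProd_applySteps cs hacc]
    have := ih (good_cons hr hacc) echk
    intro p hp
    simp only [List.map_cons, List.cons_append, List.mem_cons, List.mem_append] at hp
    rcases hp with rfl | hp | hp
    · exact hr
    · exact this p (by simp [hp])
    · exact this p (by simp [hp])

/-- Conjugation data item: (word from T, letter, steps, index of target in T). -/
abbrev ConjItem (B : Type*) := List B × B × List (ℕ × ℕ) × ℕ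

def checkConj (rules : List (Rule B)) (T : List (List B)) (data : List (ConjItem B)) : Bool :=
  data.all fun q =>
    (q.2.2.2 < T.length : Bool)
      && (applySteps rules q.2.2.1 (q.2.1 :: (q.1 ++ [q.2.1])) == T.getD q.2.2.2 [])

theorem conj_of_check (cs : CoxeterSystem M W) {rules : List (Rule B)} (hg : Good cs rules)
    {T : List (List B)} {data : List (ConjItem B)} (hchk : checkConj rules T data = true)
    {w : List B} {i : B} (hmem : (w, i) ∈ data.map (fun q => (q.1, q.2.1))) :
    ∃ w' ∈ T, cs.wordProd (i :: (w ++ [i])) = cs.wordProd w' := by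
  rw [List.mem_map] at hmem
  obtain ⟨⟨w', i', st, m⟩, hq, he⟩ := hmem
  obtain ⟨rfl, rfl⟩ : w' = w ∧ i' = i := by
    have h1 := congrArg Prod.fst he
    have h2 := congrArg Prod.snd he
    exact ⟨h1, h2⟩
  rw [checkConj, List.all_eq_true] at hchk
  have := hchk _ hq
  rw [Bool.and_eq_true] at this
  obtain ⟨hm, he2⟩ := this
  have hm' : m < T.length := by simpa using hm
  refine ⟨T.getD m [], ?_, ?_⟩
  · rw [List.getD_eq_getElem T _ hm']
    exact List.getElem_mem hm'
  · rw [← eq_of_beq he2, wordProd_applySteps cs hg]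

/-- If `T` contains a word for every simple reflection and is closed under conjugation
by simple reflections, then every reflection is `π w` for some `w ∈ T`. -/
theorem reflection_mem (cs : CoxeterSystem M W) {T : List (List B)}
    (hsimp : ∀ i : B, [i] ∈ T)
    (hconj : ∀ (i : B), ∀ w ∈ T, ∃ w' ∈ T, cs.wordProd (i :: (w ++ [i])) = cs.wordProd w')
    {t : W} (ht : cs.IsReflection t) : ∃ w ∈ T, cs.wordProd w = t := by
  obtain ⟨u, i, rfl⟩ := ht
  obtain ⟨ω, rfl⟩ := cs.wordProd_surjective u
  induction ω with
  | nil =>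
    refine ⟨[i], hsimp i, ?_⟩
    simp
  | cons j ω ih =>
    obtain ⟨w, hw, hw2⟩ := ih
    obtain ⟨w', hw', hw'2⟩ := hconj j w hw
    refine ⟨w', hw', ?_⟩
    rw [← hw'2]
    have : cs.wordProd (j :: (w ++ [j])) = cs.simple j * cs.wordProd w * cs.simple j := by
      rw [cs.wordProd_cons, cs.wordProd_append, cs.wordProd_singleton, mul_assoc]
    rw [this, hw2, cs.wordProd_cons]
    rw [mul_inv_rev, cs.inv_simple]
    group
end CoxRW

theorem group_bound {B : Type*} [DecidableEq B] {W : Type*} [Group W] {M : CoxeterMatrix B}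
    (cs : CoxeterSystem M W) (T : List (List B))
    (hrefl : ∀ t, cs.IsReflection t → ∃ w ∈ T, cs.wordProd w = t)
    (D : ℕ) (hT : T.length ≤ D) (K : ℝ) (hK : K ≤ 2 - (D : ℝ)) :
    ((K : ℝ) : EReal) ≤ graphRic cs.bruhatHasse := by
  apply le_sSup
  refine ⟨K, ?_, rfl⟩
  intro f x
  have hfin : ∀ v, ((cs.bruhatHasse).neighborSet v).Finite :=
    fun v => neighbor_finite cs T hrefl v
  have hD : ∀ v, (hfin v).toFinset.card ≤ D :=
    fun v => le_trans (neighbor_card_le cs T hrefl v (hfin v)) hT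
  have h2 := gamma2_bound cs.bruhatHasse hfin D hD f x
  have h0 := gamma_nonneg cs.bruhatHasse x (hfin x) f
  nlinarith

namespace GrpH3
abbrev MH3 : CoxeterMatrix (Fin 3) := CoxeterMatrix.H₃
abbrev csH3 : CoxeterSystem MH3 MH3.Group := MH3.toCoxeterSystem
def base : List (CoxRW.Rule (Fin 3)) := [([0,0], []), ([1,1], []), ([2,2], []), ([1,0,1], [0,1,0]), ([2,0], [0,2]), ([2,1,2,1,2], [1,2,1,2,1])]
def trace : List (CoxRW.TraceItem (Fin 3)) := [(([2,1,2,1,0,2], [1,2,1,2,1,0]), [2,1,2,1,2,0], [(4,4)], [(5,0)]),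
  (([2,1,0,2,1,0,2,1,2,1], [1,2,1,0,2,1,0,2,1,2]), [2,1,2,1,0,2,1,2,1,2], [(6,5),(4,3),(5,2)], [(0,0),(4,4),(5,3)]),
  (([2,1,0,2,1,0,2,1,0,2,1,0,2,1,2], [1,0,2,1,0,2,1,0,2,1,0,2,1]), [2,1,2,1,0,2,1,0,2,1,0,2,1,2,1], [(0,5),(5,3),(6,2)], [(1,0),(5,4),(6,3),(2,6),(1,4),(5,2),(6,1),(5,8),(6,7)]),
  (([2,1,0,2,1,0,2,1,0,2,1,0], [1,2,1,0,2,1,0,2,1,0,2,1]), [2,1,0,2,1,0,2,1,2,1,0,1], [(6,9),(7,8)], [(1,0),(7,9)])]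
def rules : List (CoxRW.Rule (Fin 3)) := trace.map (fun q => q.1) ++ base
def T : List (List (Fin 3)) := [[0], [1], [2], [0,1,0], [1,2,1], [2,1,2], [0,1,2,1,0], [0,2,1,0,2], [1,2,1,2,1], [0,1,2,1,2,1,0], [1,0,2,1,0,2,1], [0,1,0,2,1,0,2,1,0], [2,1,0,2,1,0,2,1,2], [0,2,1,0,2,1,0,2,1,0,2], [1,0,2,1,0,2,1,0,2,1,0,2,1]]
def data : List (CoxRW.ConjItem (Fin 3)) := [([0], 0, [(4,0)], 0),
  ([0], 1, [(7,0)], 3),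
  ([0], 2, [(8,0),(6,1)], 0),
  ([1], 0, [], 3),
  ([1], 1, [(5,0)], 1),
  ([1], 2, [], 5),
  ([2], 0, [(8,1),(4,0)], 2),
  ([2], 1, [], 4),
  ([2], 2, [(6,0)], 2),
  ([0,1,0], 0, [(4,0),(4,1)], 1),
  ([0,1,0], 1, [(7,0),(4,2),(5,1)], 0),
  ([0,1,0], 2, [(8,0)], 7),
  ([1,2,1], 0, [], 6),
  ([1,2,1], 1, [(5,0),(5,1)], 2),
  ([1,2,1], 2, [(9,0)], 8),
  ([2,1,2], 0, [(8,3)], 7),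
  ([2,1,2], 1, [], 8),
  ([2,1,2], 2, [(6,0),(6,1)], 1),
  ([0,1,2,1,0], 0, [(4,0),(4,3)], 4),
  ([0,1,2,1,0], 1, [(7,0),(7,4),(8,3),(4,2)], 6),
  ([0,1,2,1,0], 2, [(8,0),(0,1)], 9),
  ([0,2,1,0,2], 0, [(4,0),(8,3),(4,2)], 5),
  ([0,2,1,0,2], 1, [], 10),
  ([0,2,1,0,2], 2, [(8,0),(6,1),(6,3)], 3),
  ([1,2,1,2,1], 0, [], 9),
  ([1,2,1,2,1], 1, [(5,0),(5,3)], 5),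
  ([1,2,1,2,1], 2, [(9,0),(5,4),(6,3)], 4),
  ([0,1,2,1,2,1,0], 0, [(4,0),(4,5)], 8),
  ([0,1,2,1,2,1,0], 1, [(7,0),(7,6),(8,5)], 11),
  ([0,1,2,1,2,1,0], 2, [(8,0),(9,1),(5,5),(8,4),(6,5)], 6),
  ([1,0,2,1,0,2,1], 0, [], 11),
  ([1,0,2,1,0,2,1], 1, [(5,0),(5,5)], 7),
  ([1,0,2,1,0,2,1], 2, [], 12),
  ([0,1,0,2,1,0,2,1,0], 0, [(4,0),(4,7)], 10),
  ([0,1,0,2,1,0,2,1,0], 1, [(7,0),(4,2),(7,6),(8,5),(4,4)], 9),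
  ([0,1,0,2,1,0,2,1,0], 2, [(8,0)], 13),
  ([2,1,0,2,1,0,2,1,2], 0, [(8,9)], 13),
  ([2,1,0,2,1,0,2,1,2], 1, [(1,1),(5,0)], 12),
  ([2,1,0,2,1,0,2,1,2], 2, [(6,0),(6,7)], 10),
  ([0,2,1,0,2,1,0,2,1,0,2], 0, [(4,0),(8,9),(4,8)], 12),
  ([0,2,1,0,2,1,0,2,1,0,2], 1, [], 14),
  ([0,2,1,0,2,1,0,2,1,0,2], 2, [(8,0),(6,1),(6,9)], 11),
  ([1,0,2,1,0,2,1,0,2,1,0,2,1], 0, [(3,3),(7,1),(4,0)], 14),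
  ([1,0,2,1,0,2,1,0,2,1,0,2,1], 1, [(5,0),(5,11)], 13),
  ([1,0,2,1,0,2,1,0,2,1,0,2,1], 2, [(2,0)], 14)]
lemma base_good : CoxRW.Good csH3 base := by
  intro r hr
  simp only [base, List.mem_cons, List.not_mem_nil, or_false] at hr
  rcases hr with rfl|rfl|rfl|rfl|rfl|rfl
  · show csH3.wordProd [0,0] = csH3.wordProd []
    rw [CoxeterSystem.wordProd_cons, CoxeterSystem.wordProd_cons, CoxeterSystem.wordProd_nil, mul_one, csH3.simple_mul_simple_self]
  · show csH3.wordProd [1,1] = csH3.wordProd []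
    rw [CoxeterSystem.wordProd_cons, CoxeterSystem.wordProd_cons, CoxeterSystem.wordProd_nil, mul_one, csH3.simple_mul_simple_self]
  · show csH3.wordProd [2,2] = csH3.wordProd []
    rw [CoxeterSystem.wordProd_cons, CoxeterSystem.wordProd_cons, CoxeterSystem.wordProd_nil, mul_one, csH3.simple_mul_simple_self]
  · show csH3.wordProd [1,0,1] = csH3.wordProd [0,1,0]
    have h := csH3.wordProd_braidWord_eq 0 1
    rwa [show CoxeterSystem.braidWord MH3 0 1 = [1,0,1] by decide, show CoxeterSystem.braidWord MH3 1 0 = [0,1,0] by decide] at h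
  · show csH3.wordProd [2,0] = csH3.wordProd [0,2]
    have h := csH3.wordProd_braidWord_eq 2 0
    rwa [show CoxeterSystem.braidWord MH3 2 0 = [2,0] by decide, show CoxeterSystem.braidWord MH3 0 2 = [0,2] by decide] at h
  · show csH3.wordProd [2,1,2,1,2] = csH3.wordProd [1,2,1,2,1]
    have h := csH3.wordProd_braidWord_eq 1 2
    rwa [show CoxeterSystem.braidWord MH3 1 2 = [2,1,2,1,2] by decide, show CoxeterSystem.braidWord MH3 2 1 = [1,2,1,2,1] by decide] at h
lemma rules_good : CoxRW.Good csH3 rules :=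
  CoxRW.checkTrace_good csH3 base_good (by decide)
lemma conj_all : ∀ (i : Fin 3), ∀ w ∈ T, ∃ w' ∈ T, csH3.wordProd (i :: (w ++ [i])) = csH3.wordProd w' := by
  have hchk : CoxRW.checkConj rules T data = true := by decide
  have hpairs : ∀ (i : Fin 3), ∀ w ∈ T, (w, i) ∈ data.map (fun q => (q.1, q.2.1)) := by decide
  exact fun i w hw => CoxRW.conj_of_check csH3 rules_good hchk (hpairs i w hw)
lemma refl_mem : ∀ t, csH3.IsReflection t → ∃ w ∈ T, csH3.wordProd w = t :=
  fun t ht => CoxRW.reflection_mem csH3 (by decide) conj_all ht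
end GrpH3

namespace GrpF4
abbrev MF4 : CoxeterMatrix (Fin 4) := CoxeterMatrix.F₄
abbrev csF4 : CoxeterSystem MF4 MF4.Group := MF4.toCoxeterSystem
def base : List (CoxRW.Rule (Fin 4)) := [([0,0], []), ([1,1], []), ([2,2], []), ([3,3], []), ([1,0,1], [0,1,0]), ([2,0], [0,2]), ([3,0], [0,3]), ([2,1,2,1], [1,2,1,2]), ([3,1], [1,3]), ([3,2,3], [2,3,2])]
def trace : List (CoxRW.TraceItem (Fin 4)) := [(([2,1,0,2,1,0], [1,2,1,0,2,1]), [2,1,2,1,0,1], [(4,3),(5,2)], [(7,0),(5,3)]),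
  (([3,2,1,3], [2,3,2,1]), [3,2,3,1], [(9,2)], [(10,0)]),
  (([3,2,1,0,3], [2,3,2,1,0]), [3,2,1,3,0], [(8,3)], [(0,0)]),
  (([3,2,1,2,3,2], [2,3,2,1,2,3]), [3,2,1,3,2,3], [(12,3)], [(1,0)]),
  (([3,2,1,0,2,3,2], [2,3,2,1,0,2,3]), [3,2,1,0,3,2,3], [(13,4)], [(1,0)]),
  (([3,2,1,0,2,1,3,2,1,2], [2,3,2,1,0,2,1,3,2,1]), [3,2,1,0,2,3,2,1,2,1], [(12,6),(13,5)], [(0,0),(13,6)]),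
  (([3,2,1,0,2,1,3,2,1,0,2,1], [2,1,3,2,1,0,2,1,3,2,1,0]), [3,2,1,0,2,3,2,1,0,2,1,0], [(5,6),(14,5)], [(1,0),(14,6),(12,7),(5,2),(14,1)]),
  (([3,2,1,0,2,1,3,2,1,0,2], [2,3,2,1,0,2,1,3,2,1,0]), [3,2,1,0,2,1,3,2,1,2,0], [(12,9)], [(1,0)]),
  (([3,2,1,0,2,1,2,3,2,1,0,2,1,3,2,1], [2,1,3,2,1,0,2,1,2,3,2,1,0,2,1,2]), [3,2,1,0,2,1,3,2,1,0,2,1,3,2,1,2], [(2,6)], [(1,0),(5,8)]),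
  (([3,2,1,0,2,1,2,3,2,1,0,2,1,3,2], [2,3,2,1,0,2,1,2,3,2,1,0,2,1,2]), [3,2,1,0,2,1,2,3,2,1,0,2,1,3,2,1,1], [(10,15)], [(0,0),(16,13),(13,11),(14,10),(15,9),(14,8),(8,3),(17,2),(10,1)]),
  (([3,2,1,0,2,1,2,3,2,1,0,2,1,2,3,2], [2,3,2,1,0,2,1,2,3,2,1,0,2,1,2,3]), [3,2,1,0,2,1,2,3,2,1,0,2,1,3,2,3], [(19,13)], [(0,0)])]
def rules : List (CoxRW.Rule (Fin 4)) := trace.map (fun q => q.1) ++ base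
def T : List (List (Fin 4)) := [[0], [1], [2], [3], [0,1,0], [1,2,1], [2,1,2], [2,3,2], [0,1,2,1,0], [0,2,1,0,2], [1,2,3,2,1], [3,2,1,2,3], [0,1,2,3,2,1,0], [0,3,2,1,0,2,3], [1,0,2,1,0,2,1], [2,1,2,3,2,1,2], [0,2,1,2,3,2,1,0,2], [1,0,3,2,1,0,2,1,3], [1,0,2,1,2,3,2,1,0,2,1], [2,1,0,3,2,1,0,2,1,3,2], [1,2,1,0,3,2,1,0,2,1,3,2,1], [2,1,0,2,1,2,3,2,1,0,2,1,2], [0,1,2,1,0,3,2,1,0,2,1,3,2,1,0], [3,2,1,0,2,1,2,3,2,1,0,2,1,2,3]]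
def data : List (CoxRW.ConjItem (Fin 4)) := [([0], 0, [(11,0)], 0),
  ([0], 1, [(15,0)], 4),
  ([0], 2, [(16,0),(13,1)], 0),
  ([0], 3, [(17,0),(14,1)], 0),
  ([1], 0, [], 4),
  ([1], 1, [(12,0)], 1),
  ([1], 2, [], 6),
  ([1], 3, [(19,0),(14,1)], 1),
  ([2], 0, [(16,1),(11,0)], 2),
  ([2], 1, [], 5),
  ([2], 2, [(13,0)], 2),
  ([2], 3, [(20,0)], 7),
  ([3], 0, [(17,1),(11,0)], 3),
  ([3], 1, [(19,1),(12,0)], 3),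
  ([3], 2, [], 7),
  ([3], 3, [(14,0)], 3),
  ([0,1,0], 0, [(11,0),(11,1)], 1),
  ([0,1,0], 1, [(15,0),(11,2),(12,1)], 0),
  ([0,1,0], 2, [(16,0)], 9),
  ([0,1,0], 3, [(17,0),(19,1),(17,2),(14,3)], 4),
  ([1,2,1], 0, [], 8),
  ([1,2,1], 1, [(12,0),(12,1)], 2),
  ([1,2,1], 2, [(18,0),(13,3)], 5),
  ([1,2,1], 3, [(19,0),(1,1)], 10),
  ([2,1,2], 0, [(16,3)], 9),
  ([2,1,2], 1, [(18,1),(12,0)], 6),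
  ([2,1,2], 2, [(13,0),(13,1)], 1),
  ([2,1,2], 3, [], 11),
  ([2,3,2], 0, [(16,3),(17,2),(16,1),(11,0)], 7),
  ([2,3,2], 1, [], 10),
  ([2,3,2], 2, [(13,0),(13,1)], 3),
  ([2,3,2], 3, [(20,0),(13,2),(14,1)], 2),
  ([0,1,2,1,0], 0, [(11,0),(11,3)], 5),
  ([0,1,2,1,0], 1, [(15,0),(15,4),(16,3),(11,2)], 8),
  ([0,1,2,1,0], 2, [(16,0),(18,1),(16,4),(13,5)], 8),
  ([0,1,2,1,0], 3, [(17,0),(19,1),(2,2)], 12),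
  ([0,2,1,0,2], 0, [(11,0),(16,3),(11,2)], 6),
  ([0,2,1,0,2], 1, [], 14),
  ([0,2,1,0,2], 2, [(16,0),(13,1),(13,3)], 4),
  ([0,2,1,0,2], 3, [(17,0)], 13),
  ([1,2,3,2,1], 0, [], 12),
  ([1,2,3,2,1], 1, [(12,0),(12,3)], 7),
  ([1,2,3,2,1], 2, [], 15),
  ([1,2,3,2,1], 3, [(19,0),(20,1),(13,3),(19,2),(14,3)], 5),
  ([3,2,1,2,3], 0, [(17,5),(16,4)], 13),
  ([3,2,1,2,3], 1, [(19,5),(18,2),(19,1),(12,0)], 11),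
  ([3,2,1,2,3], 2, [(3,1),(13,0)], 11),
  ([3,2,1,2,3], 3, [(14,0),(14,3)], 6),
  ([0,1,2,3,2,1,0], 0, [(11,0),(11,5)], 10),
  ([0,1,2,3,2,1,0], 1, [(15,0),(15,6),(16,5),(17,4),(16,3),(11,2)], 12),
  ([0,1,2,3,2,1,0], 2, [(16,0)], 16),
  ([0,1,2,3,2,1,0], 3, [(17,0),(19,1),(20,2),(13,4),(19,3),(17,4),(14,5)], 8),
  ([0,3,2,1,0,2,3], 0, [(11,0),(17,5),(16,4),(11,3)], 11),
  ([0,3,2,1,0,2,3], 1, [(19,7)], 17),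
  ([0,3,2,1,0,2,3], 2, [(16,0),(4,2),(13,1)], 13),
  ([0,3,2,1,0,2,3], 3, [(17,0),(14,1),(14,5)], 9),
  ([1,0,2,1,0,2,1], 0, [(0,3),(15,1),(11,0)], 14),
  ([1,0,2,1,0,2,1], 1, [(12,0),(12,5)], 9),
  ([1,0,2,1,0,2,1], 2, [(0,0),(18,4),(15,2),(16,1),(13,7)], 14),
  ([1,0,2,1,0,2,1], 3, [(19,0),(17,1)], 17),
  ([2,1,2,3,2,1,2], 0, [(16,7)], 16),
  ([2,1,2,3,2,1,2], 1, [(18,5),(19,4),(18,1),(12,0)], 15),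
  ([2,1,2,3,2,1,2], 2, [(13,0),(13,5)], 10),
  ([2,1,2,3,2,1,2], 3, [(3,0),(19,5),(18,2),(19,1),(3,2),(14,7)], 15),
  ([0,2,1,2,3,2,1,0,2], 0, [(11,0),(16,7),(11,6)], 15),
  ([0,2,1,2,3,2,1,0,2], 1, [], 18),
  ([0,2,1,2,3,2,1,0,2], 2, [(16,0),(13,1),(13,7)], 12),
  ([0,2,1,2,3,2,1,0,2], 3, [(17,0),(3,1),(19,6),(18,3),(19,2),(17,7),(16,6),(4,3),(14,9)], 16),
  ([1,0,3,2,1,0,2,1,3], 0, [(17,9),(0,4),(19,3),(15,1),(11,0)], 17),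
  ([1,0,3,2,1,0,2,1,3], 1, [(12,0),(19,7),(12,6)], 13),
  ([1,0,3,2,1,0,2,1,3], 2, [], 19),
  ([1,0,3,2,1,0,2,1,3], 3, [(19,0),(17,1),(14,2),(14,7)], 14),
  ([1,0,2,1,2,3,2,1,0,2,1], 0, [(0,7),(19,6),(18,3),(15,1),(11,0)], 18),
  ([1,0,2,1,2,3,2,1,0,2,1], 1, [(12,0),(12,9)], 16),
  ([1,0,2,1,2,3,2,1,0,2,1], 2, [], 21),
  ([1,0,2,1,2,3,2,1,0,2,1], 3, [(19,0),(17,1),(3,2),(19,7),(18,4),(19,3),(17,8),(16,7),(4,4),(19,10),(14,11)], 18),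
  ([2,1,0,3,2,1,0,2,1,3,2], 0, [(16,11),(17,10),(0,5),(19,4),(15,2),(16,1),(11,0)], 19),
  ([2,1,0,3,2,1,0,2,1,3,2], 1, [], 20),
  ([2,1,0,3,2,1,0,2,1,3,2], 2, [(13,0),(13,9)], 17),
  ([2,1,0,3,2,1,0,2,1,3,2], 3, [(2,0),(0,2),(19,1),(18,6),(15,4),(16,3),(17,2),(20,10),(13,9)], 19),
  ([1,2,1,0,3,2,1,0,2,1,3,2,1], 0, [], 22),
  ([1,2,1,0,3,2,1,0,2,1,3,2,1], 1, [(12,0),(12,11)], 19),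
  ([1,2,1,0,3,2,1,0,2,1,3,2,1], 2, [(18,0),(16,3),(5,5),(13,4)], 20),
  ([1,2,1,0,3,2,1,0,2,1,3,2,1], 3, [(19,0),(2,1),(0,3),(19,2),(18,7),(15,5),(16,4),(17,3),(1,11),(13,10)], 20),
  ([2,1,0,2,1,2,3,2,1,0,2,1,2], 0, [(16,13),(0,8),(19,7),(18,4),(15,2),(16,1),(11,0)], 21),
  ([2,1,0,2,1,2,3,2,1,0,2,1,2], 1, [(18,11),(15,9),(16,8),(17,7),(16,6),(0,1),(12,0)], 21),
  ([2,1,0,2,1,2,3,2,1,0,2,1,2], 2, [(13,0),(13,11)], 18),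
  ([2,1,0,2,1,2,3,2,1,0,2,1,2], 3, [], 23),
  ([0,1,2,1,0,3,2,1,0,2,1,3,2,1,0], 0, [(11,0),(11,13)], 20),
  ([0,1,2,1,0,3,2,1,0,2,1,3,2,1,0], 1, [(15,0),(15,14),(16,13),(17,12),(0,7),(19,6),(15,4),(16,3),(11,2)], 22),
  ([0,1,2,1,0,3,2,1,0,2,1,3,2,1,0], 2, [(16,0),(18,1),(16,4),(7,6),(13,5)], 22),
  ([0,1,2,1,0,3,2,1,0,2,1,3,2,1,0], 3, [(17,0),(19,1),(2,2),(0,4),(19,3),(18,8),(15,6),(16,5),(17,4),(2,12),(13,11)], 22),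
  ([3,2,1,0,2,1,2,3,2,1,0,2,1,2,3], 0, [(17,15),(16,14),(0,9),(19,8),(18,5),(15,3),(16,2),(17,1),(11,0)], 23),
  ([3,2,1,0,2,1,2,3,2,1,0,2,1,2,3], 1, [(19,15),(18,12),(15,10),(16,9),(17,8),(16,7),(0,2),(19,1),(12,0)], 23),
  ([3,2,1,0,2,1,2,3,2,1,0,2,1,2,3], 2, [(10,1),(13,0)], 23),
  ([3,2,1,0,2,1,2,3,2,1,0,2,1,2,3], 3, [(14,0),(14,13)], 21)]
lemma base_good : CoxRW.Good csF4 base := by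
  intro r hr
  simp only [base, List.mem_cons, List.not_mem_nil, or_false] at hr
  rcases hr with rfl|rfl|rfl|rfl|rfl|rfl|rfl|rfl|rfl|rfl
  · show csF4.wordProd [0,0] = csF4.wordProd []
    rw [CoxeterSystem.wordProd_cons, CoxeterSystem.wordProd_cons, CoxeterSystem.wordProd_nil, mul_one, csF4.simple_mul_simple_self]
  · show csF4.wordProd [1,1] = csF4.wordProd []
    rw [CoxeterSystem.wordProd_cons, CoxeterSystem.wordProd_cons, CoxeterSystem.wordProd_nil, mul_one, csF4.simple_mul_simple_self]
  · show csF4.wordProd [2,2] = csF4.wordProd []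
    rw [CoxeterSystem.wordProd_cons, CoxeterSystem.wordProd_cons, CoxeterSystem.wordProd_nil, mul_one, csF4.simple_mul_simple_self]
  · show csF4.wordProd [3,3] = csF4.wordProd []
    rw [CoxeterSystem.wordProd_cons, CoxeterSystem.wordProd_cons, CoxeterSystem.wordProd_nil, mul_one, csF4.simple_mul_simple_self]
  · show csF4.wordProd [1,0,1] = csF4.wordProd [0,1,0]
    have h := csF4.wordProd_braidWord_eq 0 1
    rwa [show CoxeterSystem.braidWord MF4 0 1 = [1,0,1] by decide, show CoxeterSystem.braidWord MF4 1 0 = [0,1,0] by decide] at h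
  · show csF4.wordProd [2,0] = csF4.wordProd [0,2]
    have h := csF4.wordProd_braidWord_eq 2 0
    rwa [show CoxeterSystem.braidWord MF4 2 0 = [2,0] by decide, show CoxeterSystem.braidWord MF4 0 2 = [0,2] by decide] at h
  · show csF4.wordProd [3,0] = csF4.wordProd [0,3]
    have h := csF4.wordProd_braidWord_eq 3 0
    rwa [show CoxeterSystem.braidWord MF4 3 0 = [3,0] by decide, show CoxeterSystem.braidWord MF4 0 3 = [0,3] by decide] at h
  · show csF4.wordProd [2,1,2,1] = csF4.wordProd [1,2,1,2]
    have h := csF4.wordProd_braidWord_eq 2 1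
    rwa [show CoxeterSystem.braidWord MF4 2 1 = [2,1,2,1] by decide, show CoxeterSystem.braidWord MF4 1 2 = [1,2,1,2] by decide] at h
  · show csF4.wordProd [3,1] = csF4.wordProd [1,3]
    have h := csF4.wordProd_braidWord_eq 3 1
    rwa [show CoxeterSystem.braidWord MF4 3 1 = [3,1] by decide, show CoxeterSystem.braidWord MF4 1 3 = [1,3] by decide] at h
  · show csF4.wordProd [3,2,3] = csF4.wordProd [2,3,2]
    have h := csF4.wordProd_braidWord_eq 2 3
    rwa [show CoxeterSystem.braidWord MF4 2 3 = [3,2,3] by decide, show CoxeterSystem.braidWord MF4 3 2 = [2,3,2] by decide] at h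
lemma rules_good : CoxRW.Good csF4 rules :=
  CoxRW.checkTrace_good csF4 base_good (by decide)
lemma conj_all : ∀ (i : Fin 4), ∀ w ∈ T, ∃ w' ∈ T, csF4.wordProd (i :: (w ++ [i])) = csF4.wordProd w' := by
  have hchk : CoxRW.checkConj rules T data = true := by decide
  have hpairs : ∀ (i : Fin 4), ∀ w ∈ T, (w, i) ∈ data.map (fun q => (q.1, q.2.1)) := by decide
  exact fun i w hw => CoxRW.conj_of_check csF4 rules_good hchk (hpairs i w hw)
lemma refl_mem : ∀ t, csF4.IsReflection t → ∃ w ∈ T, csF4.wordProd w = t :=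
  fun t ht => CoxRW.reflection_mem csF4 (by decide) conj_all ht
end GrpF4

namespace GrpE6
abbrev ME6 : CoxeterMatrix (Fin 6) := CoxeterMatrix.E₆
abbrev csE6 : CoxeterSystem ME6 ME6.Group := ME6.toCoxeterSystem
def base : List (CoxRW.Rule (Fin 6)) := [([0,0], []), ([1,1], []), ([2,2], []), ([3,3], []), ([4,4], []), ([5,5], []), ([1,0], [0,1]), ([2,0,2], [0,2,0]), ([3,0], [0,3]), ([4,0], [0,4]), ([5,0], [0,5]), ([2,1], [1,2]), ([3,1,3], [1,3,1]), ([4,1], [1,4]), ([5,1], [1,5]), ([3,2,3], [2,3,2]), ([4,2], [2,4]), ([5,2], [2,5]), ([4,3,4], [3,4,3]), ([5,3], [3,5]), ([5,4,5], [4,5,4])]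
def trace : List (CoxRW.TraceItem (Fin 6)) := [(([2,0,1], [1,2,0]), [2,1,0], [(6,1)], [(11,0)]),
  (([3,2,0,3], [2,3,2,0]), [3,2,3,0], [(9,2)], [(16,0)]),
  (([3,1,2,3,2], [1,3,1,2,3]), [3,1,3,2,3], [(17,2)], [(14,0)]),
  (([3,1,2,3,1], [2,3,1,2,3]), [3,2,3,1,3], [(15,2),(14,1)], [(18,0),(14,2)]),
  (([3,1,2,0,3,1], [2,3,1,2,0,3]), [3,2,0,3,1,3], [(16,3),(3,1)], [(2,0),(3,2)]),
  (([4,3,1,4], [3,4,3,1]), [4,3,4,1], [(18,2)], [(23,0)]),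
  (([4,3,2,4], [3,4,3,2]), [4,3,4,2], [(22,2)], [(24,0)]),
  (([4,3,1,2,4], [3,4,3,1,2]), [4,3,1,4,2], [(23,3)], [(1,0)]),
  (([4,3,1,2,3,4,3], [3,4,3,1,2,3,4]), [4,3,1,2,4,3,4], [(26,4)], [(0,0)]),
  (([5,4,3,5], [4,5,4,3]), [5,4,5,3], [(28,2)], [(29,0)]),
  (([3,1,2,0,3,2,0], [1,3,1,2,0,3,2]), [3,1,2,3,2,0,2], [(17,4),(18,3)], [(7,0),(18,4)]),
  (([4,3,2,0,4], [3,4,3,2,0]), [4,3,2,4,0], [(20,3)], [(4,0)]),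
  (([4,3,1,2,0,4], [3,4,3,1,2,0]), [4,3,1,2,4,0], [(21,4)], [(4,0)]),
  (([4,3,1,2,0,3,4,3], [3,4,3,1,2,0,3,4]), [4,3,1,2,3,4,3,0], [(21,6),(22,5),(21,4)], [(4,0),(22,6),(21,5)]),
  (([5,4,3,1,5], [4,5,4,3,1]), [5,4,3,5,1], [(28,3)], [(4,0)]),
  (([5,4,3,2,5], [4,5,4,3,2]), [5,4,3,5,2], [(32,3)], [(5,0)]),
  (([4,3,1,2,0,3,2,4,3,2], [3,4,3,1,2,0,3,2,4,3]), [4,3,1,2,0,3,4,3,2,3], [(31,7),(32,6)], [(2,0),(32,7)]),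
  (([5,4,3,1,2,5], [4,5,4,3,1,2]), [5,4,3,1,5,2], [(34,4)], [(2,0)]),
  (([5,4,3,2,0,5], [4,5,4,3,2,0]), [5,4,3,2,5,0], [(28,4)], [(2,0)]),
  (([4,3,1,2,0,3,2,4,3,1,2], [3,4,3,1,2,0,3,2,4,3,1]), [4,3,1,2,0,3,2,4,3,2,1], [(30,9)], [(2,0)]),
  (([5,4,3,1,2,0,5], [4,5,4,3,1,2,0]), [5,4,3,1,2,5,0], [(30,5)], [(2,0)]),
  (([5,4,3,1,2,3,5], [4,5,4,3,1,2,3]), [5,4,3,1,2,5,3], [(40,5)], [(3,0)]),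
  (([5,4,3,1,2,0,3,5], [4,5,4,3,1,2,0,3]), [5,4,3,1,2,0,5,3], [(41,6)], [(1,0)]),
  (([5,4,3,1,2,3,4,5,4], [4,5,4,3,1,2,3,4,5]), [5,4,3,1,2,3,5,4,5], [(43,6)], [(1,0)]),
  (([5,4,3,1,2,0,3,2,5], [4,5,4,3,1,2,0,3,2]), [5,4,3,1,2,0,3,5,2], [(41,7)], [(1,0)]),
  (([5,4,3,1,2,0,3,4,5,4], [4,5,4,3,1,2,0,3,4,5]), [5,4,3,1,2,0,3,5,4,5], [(45,7)], [(2,0)]),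
  (([5,4,3,1,2,0,3,2,4,5,4], [4,5,4,3,1,2,0,3,2,4,5]), [5,4,3,1,2,0,3,2,5,4,5], [(46,8)], [(1,0)])]
def rules : List (CoxRW.Rule (Fin 6)) := trace.map (fun q => q.1) ++ base
def T : List (List (Fin 6)) := [[0], [1], [2], [3], [4], [5], [0,2,0], [1,3,1], [2,3,2], [3,4,3], [4,5,4], [0,2,3,2,0], [1,2,3,1,2], [1,3,4,3,1], [2,3,4,3,2], [3,4,5,4,3], [0,1,2,3,1,2,0], [0,2,3,4,3,2,0], [1,2,3,4,3,1,2], [1,3,4,5,4,3,1], [2,3,4,5,4,3,2], [0,1,2,3,4,3,1,2,0], [0,2,3,4,5,4,3,2,0], [1,2,3,4,5,4,3,1,2], [3,1,2,3,4,3,1,2,3], [0,1,2,3,4,5,4,3,1,2,0], [0,3,1,2,3,4,3,1,2,0,3], [3,1,2,3,4,5,4,3,1,2,3], [0,3,1,2,3,4,5,4,3,1,2,0,3], [2,0,3,1,2,3,4,3,1,2,0,3,2], [4,3,1,2,3,4,5,4,3,1,2,3,4], [0,4,3,1,2,3,4,5,4,3,1,2,0,3,4], [2,0,3,1,2,3,4,5,4,3,1,2,0,3,2],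 [2,0,4,3,1,2,3,4,5,4,3,1,2,0,3,2,4], [3,2,0,4,3,1,2,3,4,5,4,3,1,2,0,3,2,4,3], [1,3,2,0,4,3,1,2,3,4,5,4,3,1,2,0,3,2,4,3,1]]
def data : List (CoxRW.ConjItem (Fin 6)) := [([0], 0, [(27,0)], 0),
  ([0], 1, [(33,0),(28,1)], 0),
  ([0], 2, [(34,0)], 6),
  ([0], 3, [(35,0),(30,1)], 0),
  ([0], 4, [(36,0),(31,1)], 0),
  ([0], 5, [(37,0),(32,1)], 0),
  ([1], 0, [(33,1),(27,0)], 1),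
  ([1], 1, [(28,0)], 1),
  ([1], 2, [(38,0),(29,1)], 1),
  ([1], 3, [(39,0)], 7),
  ([1], 4, [(40,0),(31,1)], 1),
  ([1], 5, [(41,0),(32,1)], 1),
  ([2], 0, [], 6),
  ([2], 1, [(38,1),(28,0)], 2),
  ([2], 2, [(29,0)], 2),
  ([2], 3, [(42,0)], 8),
  ([2], 4, [(43,0),(31,1)], 2),
  ([2], 5, [(44,0),(32,1)], 2),
  ([3], 0, [(35,1),(27,0)], 3),
  ([3], 1, [], 7),
  ([3], 2, [], 8),
  ([3], 3, [(30,0)], 3),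
  ([3], 4, [(45,0)], 9),
  ([3], 5, [(46,0),(32,1)], 3),
  ([4], 0, [(36,1),(27,0)], 4),
  ([4], 1, [(40,1),(28,0)], 4),
  ([4], 2, [(43,1),(29,0)], 4),
  ([4], 3, [], 9),
  ([4], 4, [(31,0)], 4),
  ([4], 5, [(47,0)], 10),
  ([5], 0, [(37,1),(27,0)], 5),
  ([5], 1, [(41,1),(28,0)], 5),
  ([5], 2, [(44,1),(29,0)], 5),
  ([5], 3, [(46,1),(30,0)], 5),
  ([5], 4, [], 10),
  ([5], 5, [(32,0)], 5),
  ([0,2,0], 0, [(27,0),(27,1)], 2),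
  ([0,2,0], 1, [(33,0),(0,2),(28,1)], 6),
  ([0,2,0], 2, [(34,0),(27,2),(29,1)], 0),
  ([0,2,0], 3, [(35,0),(1,1)], 11),
  ([0,2,0], 4, [(36,0),(43,1),(36,2),(31,3)], 6),
  ([0,2,0], 5, [(37,0),(44,1),(37,2),(32,3)], 6),
  ([1,3,1], 0, [(33,3),(35,2),(33,1),(27,0)], 7),
  ([1,3,1], 1, [(28,0),(28,1)], 3),
  ([1,3,1], 2, [(38,0)], 12),
  ([1,3,1], 3, [(39,0),(28,2),(30,1)], 1),
  ([1,3,1], 4, [(40,0),(5,1)], 13),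
  ([1,3,1], 5, [(41,0),(46,1),(41,2),(32,3)], 7),
  ([2,3,2], 0, [], 11),
  ([2,3,2], 1, [(38,3)], 12),
  ([2,3,2], 2, [(29,0),(29,1)], 3),
  ([2,3,2], 3, [(42,0),(29,2),(30,1)], 2),
  ([2,3,2], 4, [(43,0),(6,1)], 14),
  ([2,3,2], 5, [(44,0),(46,1),(44,2),(32,3)], 8),
  ([3,4,3], 0, [(35,3),(36,2),(35,1),(27,0)], 9),
  ([3,4,3], 1, [], 13),
  ([3,4,3], 2, [], 14),
  ([3,4,3], 3, [(30,0),(30,1)], 4),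
  ([3,4,3], 4, [(45,0),(30,2),(31,1)], 3),
  ([3,4,3], 5, [(46,0),(9,1)], 15),
  ([4,5,4], 0, [(36,3),(37,2),(36,1),(27,0)], 10),
  ([4,5,4], 1, [(40,3),(41,2),(40,1),(28,0)], 10),
  ([4,5,4], 2, [(43,3),(44,2),(43,1),(29,0)], 10),
  ([4,5,4], 3, [], 15),
  ([4,5,4], 4, [(31,0),(31,1)], 5),
  ([4,5,4], 5, [(47,0),(31,2),(32,1)], 4),
  ([0,2,3,2,0], 0, [(27,0),(27,3)], 8),
  ([0,2,3,2,0], 1, [(33,0),(0,4)], 16),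
  ([0,2,3,2,0], 2, [(34,0),(34,4),(35,3),(27,2)], 11),
  ([0,2,3,2,0], 3, [(35,0),(42,1),(29,3),(35,2),(30,3)], 6),
  ([0,2,3,2,0], 4, [(36,0),(43,1),(11,2)], 17),
  ([0,2,3,2,0], 5, [(37,0),(44,1),(46,2),(44,3),(37,4),(32,5)], 11),
  ([1,2,3,1,2], 0, [], 16),
  ([1,2,3,1,2], 1, [(28,0),(38,3),(28,2)], 8),
  ([1,2,3,1,2], 2, [(38,0),(29,1),(29,3)], 7),
  ([1,2,3,1,2], 3, [(3,0),(2,1),(38,0),(30,5)], 12),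
  ([1,2,3,1,2], 4, [(40,0),(43,1),(7,2)], 18),
  ([1,2,3,1,2], 5, [(41,0),(44,1),(46,2),(41,3),(44,4),(32,5)], 12),
  ([1,3,4,3,1], 0, [(33,5),(35,4),(36,3),(35,2),(33,1),(27,0)], 13),
  ([1,3,4,3,1], 1, [(28,0),(28,3)], 9),
  ([1,3,4,3,1], 2, [(38,0)], 18),
  ([1,3,4,3,1], 3, [(39,0),(39,4),(40,3),(28,2)], 13),
  ([1,3,4,3,1], 4, [(40,0),(45,1),(30,3),(40,2),(31,3)], 7),
  ([1,3,4,3,1], 5, [(41,0),(46,1),(14,2)], 19),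
  ([2,3,4,3,2], 0, [], 17),
  ([2,3,4,3,2], 1, [(38,5)], 18),
  ([2,3,4,3,2], 2, [(29,0),(29,3)], 9),
  ([2,3,4,3,2], 3, [(42,0),(42,4),(43,3),(29,2)], 14),
  ([2,3,4,3,2], 4, [(43,0),(45,1),(30,3),(43,2),(31,3)], 8),
  ([2,3,4,3,2], 5, [(44,0),(46,1),(15,2)], 20),
  ([3,4,5,4,3], 0, [(35,5),(36,4),(37,3),(36,2),(35,1),(27,0)], 15),
  ([3,4,5,4,3], 1, [], 19),
  ([3,4,5,4,3], 2, [], 20),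
  ([3,4,5,4,3], 3, [(30,0),(30,3)], 10),
  ([3,4,5,4,3], 4, [(45,0),(45,4),(46,3),(30,2)], 15),
  ([3,4,5,4,3], 5, [(46,0),(47,1),(31,3),(46,2),(32,3)], 9),
  ([0,1,2,3,1,2,0], 0, [(27,0),(27,5)], 12),
  ([0,1,2,3,1,2,0], 1, [(33,0),(28,1),(0,4),(28,3)], 11),
  ([0,1,2,3,1,2,0], 2, [(0,0),(34,1),(33,0),(34,6),(33,5),(35,4),(27,3)], 16),
  ([0,1,2,3,1,2,0], 3, [(35,0),(3,1),(2,2),(38,1),(35,6),(30,7)], 16),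
  ([0,1,2,3,1,2,0], 4, [(36,0),(40,1),(43,2),(12,3)], 21),
  ([0,1,2,3,1,2,0], 5, [(37,0),(41,1),(44,2),(46,3),(41,4),(44,5),(37,6),(32,7)], 16),
  ([0,2,3,4,3,2,0], 0, [(27,0),(27,5)], 14),
  ([0,2,3,4,3,2,0], 1, [(33,0),(0,6)], 21),
  ([0,2,3,4,3,2,0], 2, [(34,0),(34,6),(35,5),(36,4),(35,3),(27,2)], 17),
  ([0,2,3,4,3,2,0], 3, [(35,0),(42,1),(1,5),(43,4),(29,3)], 17),
  ([0,2,3,4,3,2,0], 4, [(36,0),(43,1),(45,2),(30,4),(43,3),(36,4),(31,5)], 11),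
  ([0,2,3,4,3,2,0], 5, [(37,0),(44,1),(46,2),(18,3)], 22),
  ([1,2,3,4,3,1,2], 0, [], 21),
  ([1,2,3,4,3,1,2], 1, [(28,0),(38,5),(28,4)], 14),
  ([1,2,3,4,3,1,2], 2, [(38,0),(29,1),(29,5)], 13),
  ([1,2,3,4,3,1,2], 3, [], 24),
  ([1,2,3,4,3,1,2], 4, [(40,0),(43,1),(45,2),(30,4),(40,3),(43,4),(31,5)], 12),
  ([1,2,3,4,3,1,2], 5, [(41,0),(44,1),(46,2),(17,3)], 23),
  ([1,3,4,5,4,3,1], 0, [(33,7),(35,6),(36,5),(37,4),(36,3),(35,2),(33,1),(27,0)], 19),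
  ([1,3,4,5,4,3,1], 1, [(28,0),(28,5)], 15),
  ([1,3,4,5,4,3,1], 2, [(38,0)], 23),
  ([1,3,4,5,4,3,1], 3, [(39,0),(39,6),(40,5),(41,4),(40,3),(28,2)], 19),
  ([1,3,4,5,4,3,1], 4, [(40,0),(45,1),(5,5),(46,4),(30,3)], 19),
  ([1,3,4,5,4,3,1], 5, [(41,0),(46,1),(47,2),(31,4),(46,3),(41,4),(32,5)], 13),
  ([2,3,4,5,4,3,2], 0, [], 22),
  ([2,3,4,5,4,3,2], 1, [(38,7)], 23),
  ([2,3,4,5,4,3,2], 2, [(29,0),(29,5)], 15),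
  ([2,3,4,5,4,3,2], 3, [(42,0),(42,6),(43,5),(44,4),(43,3),(29,2)], 20),
  ([2,3,4,5,4,3,2], 4, [(43,0),(45,1),(6,5),(46,4),(30,3)], 20),
  ([2,3,4,5,4,3,2], 5, [(44,0),(46,1),(47,2),(31,4),(46,3),(44,4),(32,5)], 14),
  ([0,1,2,3,4,3,1,2,0], 0, [(27,0),(27,7)], 18),
  ([0,1,2,3,4,3,1,2,0], 1, [(33,0),(28,1),(0,6),(28,5)], 17),
  ([0,1,2,3,4,3,1,2,0], 2, [(0,0),(34,1),(33,0),(34,8),(33,7),(35,6),(36,5),(35,4),(27,3)], 21),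
  ([0,1,2,3,4,3,1,2,0], 3, [(35,0)], 26),
  ([0,1,2,3,4,3,1,2,0], 4, [(36,0),(40,1),(43,2),(45,3),(30,5),(40,4),(43,5),(36,6),(31,7)], 16),
  ([0,1,2,3,4,3,1,2,0], 5, [(37,0),(41,1),(44,2),(46,3),(20,4)], 25),
  ([0,2,3,4,5,4,3,2,0], 0, [(27,0),(27,7)], 20),
  ([0,2,3,4,5,4,3,2,0], 1, [(33,0),(0,8)], 25),
  ([0,2,3,4,5,4,3,2,0], 2, [(34,0),(34,8),(35,7),(36,6),(37,5),(36,4),(35,3),(27,2)], 22),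
  ([0,2,3,4,5,4,3,2,0], 3, [(35,0),(42,1),(1,7),(43,6),(44,5),(43,4),(29,3)], 22),
  ([0,2,3,4,5,4,3,2,0], 4, [(36,0),(43,1),(45,2),(11,6),(46,5),(30,4)], 22),
  ([0,2,3,4,5,4,3,2,0], 5, [(37,0),(44,1),(46,2),(47,3),(31,5),(46,4),(44,5),(37,6),(32,7)], 17),
  ([1,2,3,4,5,4,3,1,2], 0, [], 25),
  ([1,2,3,4,5,4,3,1,2], 1, [(28,0),(38,7),(28,6)], 20),
  ([1,2,3,4,5,4,3,1,2], 2, [(38,0),(29,1),(29,7)], 19),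
  ([1,2,3,4,5,4,3,1,2], 3, [], 27),
  ([1,2,3,4,5,4,3,1,2], 4, [(40,0),(43,1),(45,2),(7,6),(46,5),(30,4)], 23),
  ([1,2,3,4,5,4,3,1,2], 5, [(41,0),(44,1),(46,2),(47,3),(31,5),(46,4),(41,5),(44,6),(32,7)], 18),
  ([3,1,2,3,4,3,1,2,3], 0, [(35,9)], 26),
  ([3,1,2,3,4,3,1,2,3], 1, [(3,6),(43,5),(2,1),(28,0)], 24),
  ([3,1,2,3,4,3,1,2,3], 2, [(2,6),(40,5),(3,1),(29,0)], 24),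
  ([3,1,2,3,4,3,1,2,3], 3, [(30,0),(30,7)], 18),
  ([3,1,2,3,4,3,1,2,3], 4, [(8,0),(40,6),(3,2),(43,1),(43,7),(2,3),(40,2),(38,1),(8,3),(31,9)], 24),
  ([3,1,2,3,4,3,1,2,3], 5, [(46,0),(41,1),(44,2),(46,3),(21,4)], 27),
  ([0,1,2,3,4,5,4,3,1,2,0], 0, [(27,0),(27,9)], 23),
  ([0,1,2,3,4,5,4,3,1,2,0], 1, [(33,0),(28,1),(0,8),(28,7)], 22),
  ([0,1,2,3,4,5,4,3,1,2,0], 2, [(0,0),(34,1),(33,0),(34,10),(33,9),(35,8),(36,7),(37,6),(36,5),(35,4),(27,3)], 25),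
  ([0,1,2,3,4,5,4,3,1,2,0], 3, [(35,0)], 28),
  ([0,1,2,3,4,5,4,3,1,2,0], 4, [(36,0),(40,1),(43,2),(45,3),(12,7),(46,6),(30,5)], 25),
  ([0,1,2,3,4,5,4,3,1,2,0], 5, [(37,0),(41,1),(44,2),(46,3),(47,4),(31,6),(46,5),(41,6),(44,7),(37,8),(32,9)], 21),
  ([0,3,1,2,3,4,3,1,2,0,3], 0, [(27,0),(35,9),(27,8)], 24),
  ([0,3,1,2,3,4,3,1,2,0,3], 1, [(33,0),(4,7),(43,6),(2,2),(28,1)], 26),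
  ([0,3,1,2,3,4,3,1,2,0,3], 2, [], 29),
  ([0,3,1,2,3,4,3,1,2,0,3], 3, [(35,0),(30,1),(30,9)], 21),
  ([0,3,1,2,3,4,3,1,2,0,3], 4, [(36,0),(8,1),(40,7),(3,3),(43,2),(43,8),(2,4),(40,3),(38,2),(36,9),(35,8),(13,4),(31,11)], 26),
  ([0,3,1,2,3,4,3,1,2,0,3], 5, [(37,0),(46,1),(41,2),(44,3),(46,4),(22,5)], 28),
  ([3,1,2,3,4,5,4,3,1,2,3], 0, [(35,11)], 28),
  ([3,1,2,3,4,5,4,3,1,2,3], 1, [(3,8),(43,7),(44,6),(43,5),(2,1),(28,0)], 27),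
  ([3,1,2,3,4,5,4,3,1,2,3], 2, [(2,8),(40,7),(41,6),(40,5),(3,1),(29,0)], 27),
  ([3,1,2,3,4,5,4,3,1,2,3], 3, [(30,0),(30,9)], 23),
  ([3,1,2,3,4,5,4,3,1,2,3], 4, [], 30),
  ([3,1,2,3,4,5,4,3,1,2,3], 5, [(46,0),(41,1),(44,2),(46,3),(47,4),(31,6),(46,5),(41,6),(44,7),(46,8),(32,9)], 24),
  ([0,3,1,2,3,4,5,4,3,1,2,0,3], 0, [(27,0),(35,11),(27,10)], 27),
  ([0,3,1,2,3,4,5,4,3,1,2,0,3], 1, [(33,0),(4,9),(43,8),(44,7),(43,6),(2,2),(28,1)], 28),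
  ([0,3,1,2,3,4,5,4,3,1,2,0,3], 2, [], 32),
  ([0,3,1,2,3,4,5,4,3,1,2,0,3], 3, [(35,0),(30,1),(30,11)], 25),
  ([0,3,1,2,3,4,5,4,3,1,2,0,3], 4, [(36,0)], 31),
  ([0,3,1,2,3,4,5,4,3,1,2,0,3], 5, [(37,0),(46,1),(41,2),(44,3),(46,4),(47,5),(31,7),(46,6),(41,7),(44,8),(37,9),(46,10),(32,11)], 26),
  ([2,0,3,1,2,3,4,3,1,2,0,3,2], 0, [(10,8),(40,7),(3,3),(34,1),(27,0)], 29),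
  ([2,0,3,1,2,3,4,3,1,2,0,3,2], 1, [(38,13),(4,8),(43,7),(2,3),(0,1),(28,0)], 29),
  ([2,0,3,1,2,3,4,3,1,2,0,3,2], 2, [(29,0),(29,11)], 26),
  ([2,0,3,1,2,3,4,3,1,2,0,3,2], 3, [(1,0),(0,2),(34,3),(33,2),(35,1),(42,12),(34,10),(33,9),(35,8),(36,7),(35,6),(27,5)], 29),
  ([2,0,3,1,2,3,4,3,1,2,0,3,2], 4, [(43,0),(36,1),(8,2),(40,8),(3,4),(43,3),(43,9),(2,5),(40,4),(38,3),(36,10),(35,9),(13,5),(43,12),(31,13)], 29),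
  ([2,0,3,1,2,3,4,3,1,2,0,3,2], 5, [(44,0),(37,1),(46,2),(41,3),(44,4),(46,5),(24,6)], 32),
  ([4,3,1,2,3,4,5,4,3,1,2,3,4], 0, [(36,13),(35,12)], 31),
  ([4,3,1,2,3,4,5,4,3,1,2,3,4], 1, [(40,13),(3,9),(43,8),(44,7),(43,6),(2,2),(40,1),(28,0)], 30),
  ([4,3,1,2,3,4,5,4,3,1,2,3,4], 2, [(43,13),(2,9),(40,8),(41,7),(40,6),(3,2),(43,1),(29,0)], 30),
  ([4,3,1,2,3,4,5,4,3,1,2,3,4], 3, [(8,8),(46,7),(8,1),(30,0)], 30),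
  ([4,3,1,2,3,4,5,4,3,1,2,3,4], 4, [(31,0),(31,11)], 27),
  ([4,3,1,2,3,4,5,4,3,1,2,3,4], 5, [(23,0),(46,8),(8,2),(46,1),(41,9),(40,8),(3,4),(43,3),(44,2),(44,10),(43,9),(2,5),(40,4),(41,3),(38,2),(46,11),(8,5),(46,4),(23,5),(32,13)], 30),
  ([0,4,3,1,2,3,4,5,4,3,1,2,0,3,4], 0, [(27,0),(36,13),(35,12),(27,11)], 30),
  ([0,4,3,1,2,3,4,5,4,3,1,2,0,3,4], 1, [(33,0),(40,15),(4,10),(43,9),(44,8),(43,7),(2,3),(40,2),(28,1)], 31),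
  ([0,4,3,1,2,3,4,5,4,3,1,2,0,3,4], 2, [(43,15)], 33),
  ([0,4,3,1,2,3,4,5,4,3,1,2,0,3,4], 3, [(35,0),(13,9),(46,8),(8,2),(30,1)], 31),
  ([0,4,3,1,2,3,4,5,4,3,1,2,0,3,4], 4, [(36,0),(31,1),(31,13)], 28),
  ([0,4,3,1,2,3,4,5,4,3,1,2,0,3,4], 5, [(37,0),(23,1),(46,9),(8,3),(46,2),(41,10),(40,9),(3,5),(43,4),(44,3),(44,11),(43,10),(2,6),(40,5),(41,4),(38,3),(37,12),(36,11),(35,10),(46,13),(13,6),(46,5),(25,6),(32,15)], 31),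
  ([2,0,3,1,2,3,4,5,4,3,1,2,0,3,2], 0, [(10,10),(40,9),(41,8),(40,7),(3,3),(34,1),(27,0)], 32),
  ([2,0,3,1,2,3,4,5,4,3,1,2,0,3,2], 1, [(38,15),(4,10),(43,9),(44,8),(43,7),(2,3),(0,1),(28,0)], 32),
  ([2,0,3,1,2,3,4,5,4,3,1,2,0,3,2], 2, [(29,0),(29,13)], 28),
  ([2,0,3,1,2,3,4,5,4,3,1,2,0,3,2], 3, [(1,0),(0,2),(34,3),(33,2),(35,1),(42,14),(34,12),(33,11),(35,10),(36,9),(37,8),(36,7),(35,6),(27,5)], 32),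
  ([2,0,3,1,2,3,4,5,4,3,1,2,0,3,2], 4, [(43,0),(36,1)], 33),
  ([2,0,3,1,2,3,4,5,4,3,1,2,0,3,2], 5, [(44,0),(37,1),(46,2),(41,3),(44,4),(46,5),(47,6),(31,8),(46,7),(41,8),(44,9),(37,10),(46,11),(44,12),(32,13)], 29),
  ([2,0,4,3,1,2,3,4,5,4,3,1,2,0,3,2,4], 0, [(36,17),(10,11),(40,10),(41,9),(40,8),(3,4),(43,3),(34,1),(27,0)], 33),
  ([2,0,4,3,1,2,3,4,5,4,3,1,2,0,3,2,4], 1, [(40,17),(38,16),(4,11),(43,10),(44,9),(43,8),(2,4),(40,3),(0,1),(28,0)], 33),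
  ([2,0,4,3,1,2,3,4,5,4,3,1,2,0,3,2,4], 2, [(29,0),(43,15),(29,14)], 31),
  ([2,0,4,3,1,2,3,4,5,4,3,1,2,0,3,2,4], 3, [], 34),
  ([2,0,4,3,1,2,3,4,5,4,3,1,2,0,3,2,4], 4, [(43,0),(36,1),(31,2),(31,15)], 32),
  ([2,0,4,3,1,2,3,4,5,4,3,1,2,0,3,2,4], 5, [(44,0),(37,1),(23,2),(46,10),(8,4),(46,3),(41,11),(40,10),(3,6),(43,5),(44,4),(44,12),(43,11),(2,7),(40,6),(41,5),(38,4),(37,13),(36,12),(35,11),(46,14),(13,7),(46,6),(44,15),(43,14),(26,7),(32,17)], 33),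
  ([3,2,0,4,3,1,2,3,4,5,4,3,1,2,0,3,2,4,3], 0, [(35,19),(36,18),(10,12),(40,11),(41,10),(40,9),(3,5),(43,4),(34,2),(35,1),(27,0)], 34),
  ([3,2,0,4,3,1,2,3,4,5,4,3,1,2,0,3,2,4,3], 1, [], 35),
  ([3,2,0,4,3,1,2,3,4,5,4,3,1,2,0,3,2,4,3], 2, [(16,11),(46,10),(8,4),(1,1),(29,0)], 34),
  ([3,2,0,4,3,1,2,3,4,5,4,3,1,2,0,3,2,4,3], 3, [(30,0),(30,17)], 33),
  ([3,2,0,4,3,1,2,3,4,5,4,3,1,2,0,3,2,4,3], 4, [(11,0),(1,2),(43,1),(0,4),(34,5),(33,4),(35,3),(36,2),(45,18),(42,16),(34,14),(33,13),(35,12),(36,11),(37,10),(36,9),(35,8),(27,7)], 34),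
  ([3,2,0,4,3,1,2,3,4,5,4,3,1,2,0,3,2,4,3], 5, [(46,0),(44,1),(37,2),(23,3),(46,11),(8,5),(46,4),(41,12),(40,11),(3,7),(43,6),(44,5),(44,13),(43,12),(2,8),(40,7),(41,6),(38,5),(37,14),(36,13),(35,12),(46,15),(13,8),(46,7),(44,16),(43,15),(26,8),(46,18),(32,19)], 34),
  ([1,3,2,0,4,3,1,2,3,4,5,4,3,1,2,0,3,2,4,3,1], 0, [(33,21),(35,20),(36,19),(10,13),(40,12),(41,11),(40,10),(3,6),(43,5),(34,3),(35,2),(33,1),(27,0)], 35),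
  ([1,3,2,0,4,3,1,2,3,4,5,4,3,1,2,0,3,2,4,3,1], 1, [(28,0),(28,19)], 34),
  ([1,3,2,0,4,3,1,2,3,4,5,4,3,1,2,0,3,2,4,3,1], 2, [(38,0),(19,12),(46,11),(8,5),(1,2),(29,1)], 35),
  ([1,3,2,0,4,3,1,2,3,4,5,4,3,1,2,0,3,2,4,3,1], 3, [(39,0),(39,20),(40,19),(38,18),(4,13),(43,12),(44,11),(43,10),(2,6),(40,5),(0,3),(28,2)], 35),
  ([1,3,2,0,4,3,1,2,3,4,5,4,3,1,2,0,3,2,4,3,1], 4, [(40,0),(11,1),(1,3),(43,2),(0,5),(34,6),(33,5),(35,4),(36,3),(5,19),(42,17),(34,15),(33,14),(35,13),(36,12),(37,11),(36,10),(35,9),(27,8)], 35),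
  ([1,3,2,0,4,3,1,2,3,4,5,4,3,1,2,0,3,2,4,3,1], 5, [(41,0),(46,1),(44,2),(37,3),(23,4),(46,12),(8,6),(46,5),(41,13),(40,12),(3,8),(43,7),(44,6),(44,14),(43,13),(2,9),(40,8),(41,7),(38,6),(37,15),(36,14),(35,13),(46,16),(13,9),(46,8),(44,17),(43,16),(26,9),(46,19),(41,20),(32,21)], 35)]
lemma base_good : CoxRW.Good csE6 base := by
  intro r hr
  simp only [base, List.mem_cons, List.not_mem_nil, or_false] at hr
  rcases hr with rfl|rfl|rfl|rfl|rfl|rfl|rfl|rfl|rfl|rfl|rfl|rfl|rfl|rfl|rfl|rfl|rfl|rfl|rfl|rfl|rfl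
  · show csE6.wordProd [0,0] = csE6.wordProd []
    rw [CoxeterSystem.wordProd_cons, CoxeterSystem.wordProd_cons, CoxeterSystem.wordProd_nil, mul_one, csE6.simple_mul_simple_self]
  · show csE6.wordProd [1,1] = csE6.wordProd []
    rw [CoxeterSystem.wordProd_cons, CoxeterSystem.wordProd_cons, CoxeterSystem.wordProd_nil, mul_one, csE6.simple_mul_simple_self]
  · show csE6.wordProd [2,2] = csE6.wordProd []
    rw [CoxeterSystem.wordProd_cons, CoxeterSystem.wordProd_cons, CoxeterSystem.wordProd_nil, mul_one, csE6.simple_mul_simple_self]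
  · show csE6.wordProd [3,3] = csE6.wordProd []
    rw [CoxeterSystem.wordProd_cons, CoxeterSystem.wordProd_cons, CoxeterSystem.wordProd_nil, mul_one, csE6.simple_mul_simple_self]
  · show csE6.wordProd [4,4] = csE6.wordProd []
    rw [CoxeterSystem.wordProd_cons, CoxeterSystem.wordProd_cons, CoxeterSystem.wordProd_nil, mul_one, csE6.simple_mul_simple_self]
  · show csE6.wordProd [5,5] = csE6.wordProd []
    rw [CoxeterSystem.wordProd_cons, CoxeterSystem.wordProd_cons, CoxeterSystem.wordProd_nil, mul_one, csE6.simple_mul_simple_self]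
  · show csE6.wordProd [1,0] = csE6.wordProd [0,1]
    have h := csE6.wordProd_braidWord_eq 1 0
    rwa [show CoxeterSystem.braidWord ME6 1 0 = [1,0] by decide, show CoxeterSystem.braidWord ME6 0 1 = [0,1] by decide] at h
  · show csE6.wordProd [2,0,2] = csE6.wordProd [0,2,0]
    have h := csE6.wordProd_braidWord_eq 0 2
    rwa [show CoxeterSystem.braidWord ME6 0 2 = [2,0,2] by decide, show CoxeterSystem.braidWord ME6 2 0 = [0,2,0] by decide] at h
  · show csE6.wordProd [3,0] = csE6.wordProd [0,3]
    have h := csE6.wordProd_braidWord_eq 3 0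
    rwa [show CoxeterSystem.braidWord ME6 3 0 = [3,0] by decide, show CoxeterSystem.braidWord ME6 0 3 = [0,3] by decide] at h
  · show csE6.wordProd [4,0] = csE6.wordProd [0,4]
    have h := csE6.wordProd_braidWord_eq 4 0
    rwa [show CoxeterSystem.braidWord ME6 4 0 = [4,0] by decide, show CoxeterSystem.braidWord ME6 0 4 = [0,4] by decide] at h
  · show csE6.wordProd [5,0] = csE6.wordProd [0,5]
    have h := csE6.wordProd_braidWord_eq 5 0
    rwa [show CoxeterSystem.braidWord ME6 5 0 = [5,0] by decide, show CoxeterSystem.braidWord ME6 0 5 = [0,5] by decide] at h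
  · show csE6.wordProd [2,1] = csE6.wordProd [1,2]
    have h := csE6.wordProd_braidWord_eq 2 1
    rwa [show CoxeterSystem.braidWord ME6 2 1 = [2,1] by decide, show CoxeterSystem.braidWord ME6 1 2 = [1,2] by decide] at h
  · show csE6.wordProd [3,1,3] = csE6.wordProd [1,3,1]
    have h := csE6.wordProd_braidWord_eq 1 3
    rwa [show CoxeterSystem.braidWord ME6 1 3 = [3,1,3] by decide, show CoxeterSystem.braidWord ME6 3 1 = [1,3,1] by decide] at h
  · show csE6.wordProd [4,1] = csE6.wordProd [1,4]
    have h := csE6.wordProd_braidWord_eq 4 1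
    rwa [show CoxeterSystem.braidWord ME6 4 1 = [4,1] by decide, show CoxeterSystem.braidWord ME6 1 4 = [1,4] by decide] at h
  · show csE6.wordProd [5,1] = csE6.wordProd [1,5]
    have h := csE6.wordProd_braidWord_eq 5 1
    rwa [show CoxeterSystem.braidWord ME6 5 1 = [5,1] by decide, show CoxeterSystem.braidWord ME6 1 5 = [1,5] by decide] at h
  · show csE6.wordProd [3,2,3] = csE6.wordProd [2,3,2]
    have h := csE6.wordProd_braidWord_eq 2 3
    rwa [show CoxeterSystem.braidWord ME6 2 3 = [3,2,3] by decide, show CoxeterSystem.braidWord ME6 3 2 = [2,3,2] by decide] at h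
  · show csE6.wordProd [4,2] = csE6.wordProd [2,4]
    have h := csE6.wordProd_braidWord_eq 4 2
    rwa [show CoxeterSystem.braidWord ME6 4 2 = [4,2] by decide, show CoxeterSystem.braidWord ME6 2 4 = [2,4] by decide] at h
  · show csE6.wordProd [5,2] = csE6.wordProd [2,5]
    have h := csE6.wordProd_braidWord_eq 5 2
    rwa [show CoxeterSystem.braidWord ME6 5 2 = [5,2] by decide, show CoxeterSystem.braidWord ME6 2 5 = [2,5] by decide] at h
  · show csE6.wordProd [4,3,4] = csE6.wordProd [3,4,3]
    have h := csE6.wordProd_braidWord_eq 3 4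
    rwa [show CoxeterSystem.braidWord ME6 3 4 = [4,3,4] by decide, show CoxeterSystem.braidWord ME6 4 3 = [3,4,3] by decide] at h
  · show csE6.wordProd [5,3] = csE6.wordProd [3,5]
    have h := csE6.wordProd_braidWord_eq 5 3
    rwa [show CoxeterSystem.braidWord ME6 5 3 = [5,3] by decide, show CoxeterSystem.braidWord ME6 3 5 = [3,5] by decide] at h
  · show csE6.wordProd [5,4,5] = csE6.wordProd [4,5,4]
    have h := csE6.wordProd_braidWord_eq 4 5
    rwa [show CoxeterSystem.braidWord ME6 4 5 = [5,4,5] by decide, show CoxeterSystem.braidWord ME6 5 4 = [4,5,4] by decide] at h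
lemma rules_good : CoxRW.Good csE6 rules :=
  CoxRW.checkTrace_good csE6 base_good (by decide)
lemma conj_all : ∀ (i : Fin 6), ∀ w ∈ T, ∃ w' ∈ T, csE6.wordProd (i :: (w ++ [i])) = csE6.wordProd w' := by
  have hchk : CoxRW.checkConj rules T data = true := by decide
  have hpairs : ∀ (i : Fin 6), ∀ w ∈ T, (w, i) ∈ data.map (fun q => (q.1, q.2.1)) := by decide
  exact fun i w hw => CoxRW.conj_of_check csE6 rules_good hchk (hpairs i w hw)
lemma refl_mem : ∀ t, csE6.IsReflection t → ∃ w ∈ T, csE6.wordProd w = t :=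
  fun t ht => CoxRW.reflection_mem csE6 (by decide) conj_all ht
end GrpE6

/-- Bounds on the discrete Ricci curvature of the Hasse diagrams of the strong Bruhat
order of the exceptional Coxeter groups `F₄`, `E₆` and `H₃`. -/
theorem ric_hasse_exceptional :
    ((-28 : ℝ) : EReal) ≤ graphRic CoxeterMatrix.F₄.toCoxeterSystem.bruhatHasse ∧
    ((-46 : ℝ) : EReal) ≤ graphRic CoxeterMatrix.E₆.toCoxeterSystem.bruhatHasse ∧
    ((-14 : ℝ) : EReal) ≤ graphRic CoxeterMatrix.H₃.toCoxeterSystem.bruhatHasse := by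
  refine ⟨?_, ?_, ?_⟩
  · exact group_bound GrpF4.csF4 GrpF4.T GrpF4.refl_mem 30 (by decide) (-28) (by norm_num)
  · exact group_bound GrpE6.csE6 GrpE6.T GrpE6.refl_mem 48 (by decide) (-46) (by norm_num)
  · exact group_bound GrpH3.csH3 GrpH3.T GrpH3.refl_mem 16 (by decide) (-14) (by norm_num)
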